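/- Let A be an abelian category. Suppose given a pullback square consisting of x : X' ⟶ X, f' : X' ⟶ Y', f : X ⟶ Y, y : Y' ⟶ Y with f' ≫ y = x ≫ f (IsPullback), where y is an epimorphism. Suppose given g : Y ⟶ X, an object B that is both injective and projective, and h₁ : Y ⟶ B, h₂ : B ⟶ Y with g ≫ f = 𝟙 Y + h₁ ≫ h₂. Then there exist g' : Y' ⟶ X' and h₂' : B ⟶ Y' such that h₂' ≫ y = h₂, g' ≫ x = y ≫ g, and g' ≫ f' = 𝟙 Y' + y ≫ h₁ ≫ h₂'. (In particular, if f is a retraction up to maps factoring through a bijective object, then so is the pullback f' of f along the epimorphism y.) -/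
import Mathlib

open CategoryTheory CategoryTheory.Limits

/-- Given a pullback square `(x : X' ⟶ X, f' : X' ⟶ Y', f : X ⟶ Y, y : Y' ⟶ Y)` in an abelian
category with `y` an epimorphism, if `f` is a retraction up to a morphism factoring through an
object `B` that is both injective and projective (i.e. `g ≫ f = 𝟙 Y + h₁ ≫ h₂`), then so is
its pullback `f'`: there are `g' : Y' ⟶ X'` and `h₂' : B ⟶ Y'` with `h₂' ≫ y = h₂`,
`g' ≫ x = y ≫ g` and `g' ≫ f' = 𝟙 Y' + y ≫ h₁ ≫ h₂'`. -/
theorem retractionUpToHomotopy_pullback {A : Type*} [Category A] [Abelian A]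
    {X X' Y Y' B : A} (x : X' ⟶ X) (f' : X' ⟶ Y') (f : X ⟶ Y) (y : Y' ⟶ Y)
    (pb : IsPullback x f' f y) (hy : Epi y)
    (g : Y ⟶ X) (hBi : Injective B) (hBp : Projective B)
    (h₁ : Y ⟶ B) (h₂ : B ⟶ Y) (hg : g ≫ f = 𝟙 Y + h₁ ≫ h₂) :
    ∃ (g' : Y' ⟶ X') (h₂' : B ⟶ Y'),
      h₂' ≫ y = h₂ ∧ g' ≫ x = y ≫ g ∧ g' ≫ f' = 𝟙 Y' + y ≫ h₁ ≫ h₂' := by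
  haveI := hBp
  let h₂' : B ⟶ Y' := Projective.factorThru h₂ y
  have hfac : h₂' ≫ y = h₂ := Projective.factorThru_comp h₂ y
  have hcomm : (y ≫ g) ≫ f = (𝟙 Y' + y ≫ h₁ ≫ h₂') ≫ y := by
    simp [Preadditive.add_comp, Category.assoc, hfac, hg, Preadditive.comp_add]
  refine ⟨pb.lift (y ≫ g) (𝟙 Y' + y ≫ h₁ ≫ h₂') hcomm, h₂', hfac,
    pb.lift_fst _ _ _, pb.lift_snd _ _ _⟩
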